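/- Let a > 0, let H : [a,∞) → ℝ be strictly increasing, bounded and non-negative, and let G₁, G₂ : [a,∞) → ℝ be continuous functions of bounded variation on [a,∞) with lim_{x→∞} G₁(x) = lim_{x→∞} G₂(x) = 0. If G₁(x) < G₂(x) for all x ≥ a, then ∫_a^∞ H(x) d[−G₁(x)] < ∫_a^∞ H(x) d[−G₂(x)], where the integrals are improper Riemann–Stieltjes integrals. -/

import Mathlib

open Set Filter

noncomputable section

/-- The Riemann–Stieltjes sum of `f` with respect to `g` for the tagged partition
given by points `t 0, t 1, ..., t n` with tags `ξ 0, ..., ξ (n-1)`. -/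
def rsSum (f g : ℝ → ℝ) (n : ℕ) (t ξ : ℕ → ℝ) : ℝ :=
  ∑ i ∈ Finset.range n, f (ξ i) * (g (t (i + 1)) - g (t i))

/-- `IsRSIntegral f g a b I` says that the Riemann–Stieltjes integral
`∫_a^b f(x) dg(x)` exists and equals `I`: for every `ε > 0` there is `δ > 0` such
that every tagged partition of `[a, b]` of mesh `< δ` has Riemann–Stieltjes sum
within `ε` of `I`. -/
def IsRSIntegral (f g : ℝ → ℝ) (a b I : ℝ) : Prop :=
  ∀ ε > 0, ∃ δ > 0, ∀ (n : ℕ) (t ξ : ℕ → ℝ),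
    t 0 = a → t n = b →
    (∀ i < n, t i ≤ t (i + 1)) →
    (∀ i < n, ξ i ∈ Set.Icc (t i) (t (i + 1))) →
    (∀ i < n, t (i + 1) - t i < δ) →
    |rsSum f g n t ξ - I| < ε

/-- `IsImproperRSIntegral f g a I` says that the improper Riemann–Stieltjes integral
`∫_a^∞ f(x) dg(x) = lim_{b→∞} ∫_a^b f(x) dg(x)` exists and equals `I`. -/
def IsImproperRSIntegral (f g : ℝ → ℝ) (a I : ℝ) : Prop :=
  ∃ F : ℝ → ℝ, (∀ b, a < b → IsRSIntegral f g a b (F b)) ∧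
    Filter.Tendsto F Filter.atTop (nhds I)

lemma abel_sum (f g : ℕ → ℝ) (k : ℕ) :
    ∑ i ∈ Finset.range (k+1), f i * (g i - g (i+1)) =
      f 0 * g 0 - f k * g (k+1) + ∑ i ∈ Finset.range k, (f (i+1) - f i) * g (i+1) := by
  induction k with
  | zero => simp [Finset.sum_range_one]; ring
  | succ k ih => rw [Finset.sum_range_succ, ih, Finset.sum_range_succ]; ring

/-- Key lower bound for the difference Riemann–Stieltjes sum. -/
lemma key_lower (a b : ℝ) (H D : ℝ → ℝ) (m hh M : ℝ)
    (hm0 : 0 ≤ m)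
    (hab : a + 1 ≤ b)
    (hHmono : MonotoneOn H (Set.Ici a))
    (hHnn : 0 ≤ H a)
    (hM : ∀ x ∈ Set.Icc a b, H x ≤ M)
    (hDnn : ∀ x ∈ Set.Icc a b, 0 ≤ D x)
    (hmD : ∀ x ∈ Set.Icc a (a+1), m ≤ D x)
    (hhh : hh ≤ H (a + 1/2) - H a)
    (n : ℕ) (t : ℕ → ℝ)
    (ht0 : t 0 = a) (htn : t n = b)
    (hstep : ∀ i < n, t i ≤ t (i+1))
    (hmesh : ∀ i < n, t (i+1) - t i < 1/2) :
    m * hh - M * D b ≤ ∑ i ∈ Finset.range n, H (t i) * (D (t i) - D (t (i+1))) := by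
  have hab' : a ≤ b := by linarith
  -- monotonicity of t
  have htmono : ∀ i j, i ≤ j → j ≤ n → t i ≤ t j := by
    intro i j hij hjn
    obtain ⟨c, rfl⟩ := Nat.exists_eq_add_of_le hij
    clear hij
    induction c with
    | zero => simp
    | succ c ih =>
      have h1 : i + c < n := by omega
      have := hstep (i + c) h1
      have := ih (by omega)
      calc t i ≤ t (i + c) := this
        _ ≤ t (i + c + 1) := by simpa [Nat.add_assoc] using hstep (i+c) h1
        _ = t (i + (c+1)) := by ring_nf
  have hta : ∀ i, i ≤ n → a ≤ t i := fun i hi => ht0 ▸ htmono 0 i (Nat.zero_le _) hi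
  have htb : ∀ i, i ≤ n → t i ≤ b := fun i hi => htn ▸ htmono i n hi le_rfl
  have htIcc : ∀ i, i ≤ n → t i ∈ Set.Icc a b := fun i hi => ⟨hta i hi, htb i hi⟩
  -- n ≥ 1
  obtain ⟨k, rfl⟩ : ∃ k, n = k + 1 := by
    cases n with
    | zero => exfalso; rw [ht0] at htn; linarith
    | succ k => exact ⟨k, rfl⟩
  rw [abel_sum (fun i => H (t i)) (fun i => D (t i)) k, ht0, htn]
  -- find K : minimal index with a + 1/2 ≤ t K
  have hPk : a + 1/2 ≤ t k := by
    have := hmesh k (Nat.lt_succ_self k)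
    have := htn ▸ htb (k+1) le_rfl
    have : b ≤ t (k+1) := le_of_eq htn.symm
    linarith [hmesh k (Nat.lt_succ_self k)]
  classical
  have hex : ∃ j, a + 1/2 ≤ t j := ⟨k, hPk⟩
  set K := Nat.find hex with hKdef
  have hKspec : a + 1/2 ≤ t K := Nat.find_spec hex
  have hKk : K ≤ k := Nat.find_min' hex hPk
  have hK1 : 1 ≤ K := by
    by_contra h
    have : K = 0 := by omega
    rw [this, ht0] at hKspec; linarith
  have hKle : t K ≤ a + 1 := by
    have hmin : ¬ a + 1/2 ≤ t (K - 1) := Nat.find_min hex (by omega)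
    have hK1' : K - 1 < k + 1 := by omega
    have := hmesh (K - 1) hK1'
    have hKe : K - 1 + 1 = K := by omega
    rw [hKe] at this
    linarith
  -- bound the three pieces
  have h1 : 0 ≤ H a * D a := mul_nonneg hHnn (hDnn a ⟨le_rfl, hab'⟩)
  have h2 : H (t k) * D b ≤ M * D b :=
    mul_le_mul_of_nonneg_right (hM _ (htIcc k (by omega))) (hDnn b ⟨hab', le_rfl⟩)
  have h3 : m * hh ≤ ∑ i ∈ Finset.range k, (H (t (i+1)) - H (t i)) * D (t (i+1)) := by
    have hterm : ∀ i < k, 0 ≤ (H (t (i+1)) - H (t i)) * D (t (i+1)) := by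
      intro i hi
      apply mul_nonneg
      · have := hHmono (hta i (by omega)) (hta (i+1) (by omega))
          (hstep i (by omega))
        linarith
      · exact hDnn _ (htIcc (i+1) (by omega))
    calc m * hh ≤ hh * m := le_of_eq (mul_comm m hh)
      _ ≤ (H (t K) - H (t 0)) * m := by
          apply mul_le_mul_of_nonneg_right _ hm0
          have : H (a + 1/2) ≤ H (t K) :=
            hHmono (by simp only [Set.mem_Ici]; linarith) (hta K (by omega)) hKspec
          rw [ht0]; linarith
      _ = ∑ i ∈ Finset.range K, (H (t (i+1)) - H (t i)) * m := by
          rw [← Finset.sum_mul, Finset.sum_range_sub (fun i => H (t i))]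
      _ ≤ ∑ i ∈ Finset.range K, (H (t (i+1)) - H (t i)) * D (t (i+1)) := by
          apply Finset.sum_le_sum
          intro i hi
          rw [Finset.mem_range] at hi
          apply mul_le_mul_of_nonneg_left _ _
          · apply hmD
            constructor
            · exact hta (i+1) (by omega)
            · calc t (i+1) ≤ t K := htmono (i+1) K (by omega) (by omega)
                _ ≤ a + 1 := hKle
          · have := hHmono (hta i (by omega)) (hta (i+1) (by omega))
              (hstep i (by omega))
            linarith
      _ ≤ ∑ i ∈ Finset.range k, (H (t (i+1)) - H (t i)) * D (t (i+1)) := by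
          apply Finset.sum_le_sum_of_subset_of_nonneg
          · exact Finset.range_subset_range.mpr hKk
          · intro i hi _
            exact hterm i (Finset.mem_range.mp hi)
  linarith


/-- If `a > 0`, `H` is strictly increasing, bounded and non-negative on
`[a,∞)`, `G₁, G₂` are continuous, of bounded variation on `[a,∞)` and tend to `0` at `∞`,
and `G₁ < G₂` on `[a,∞)`, then `∫_a^∞ H(x) d[-G₁(x)] < ∫_a^∞ H(x) d[-G₂(x)]`. -/
theorem rs_improper_monotone_strict_increasing
    (a : ℝ) (ha : 0 < a)
    (H G₁ G₂ : ℝ → ℝ) (I₁ I₂ : ℝ)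
    (hH_mono : StrictMonoOn H (Set.Ici a))
    (hH_bdd : ∃ M, ∀ x ∈ Set.Ici a, |H x| ≤ M)
    (hH_nonneg : ∀ x ∈ Set.Ici a, 0 ≤ H x)
    (hG₁_cont : ContinuousOn G₁ (Set.Ici a))
    (hG₁_bv : BoundedVariationOn G₁ (Set.Ici a))
    (hG₂_cont : ContinuousOn G₂ (Set.Ici a))
    (hG₂_bv : BoundedVariationOn G₂ (Set.Ici a))
    (hG₁_lim : Filter.Tendsto G₁ Filter.atTop (nhds 0))
    (hG₂_lim : Filter.Tendsto G₂ Filter.atTop (nhds 0))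
    (hlt : ∀ x ∈ Set.Ici a, G₁ x < G₂ x)
    (hI₁ : IsImproperRSIntegral H (fun x => -G₁ x) a I₁)
    (hI₂ : IsImproperRSIntegral H (fun x => -G₂ x) a I₂) :
    I₁ < I₂ := by
  obtain ⟨M, hM⟩ := hH_bdd
  obtain ⟨F₁, hF₁, hF₁lim⟩ := hI₁
  obtain ⟨F₂, hF₂, hF₂lim⟩ := hI₂
  set D := fun x => G₂ x - G₁ x with hDdef
  have hcont : ContinuousOn D (Set.Icc a (a+1)) :=
    (hG₂_cont.mono Set.Icc_subset_Ici_self).sub (hG₁_cont.mono Set.Icc_subset_Ici_self)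
  obtain ⟨x₀, hx₀mem, hx₀min⟩ :=
    isCompact_Icc.exists_isMinOn ⟨a, Set.left_mem_Icc.mpr (by linarith)⟩ hcont
  set m := D x₀ with hmdef
  have hm_pos : 0 < m := sub_pos.mpr (hlt x₀ hx₀mem.1)
  have hmD : ∀ x ∈ Set.Icc a (a+1), m ≤ D x := fun x hx => isMinOn_iff.mp hx₀min x hx
  set hh := H (a + 1/2) - H a with hhdef
  have hhpos : 0 < hh :=
    sub_pos.mpr (hH_mono (Set.self_mem_Ici) (by simp only [Set.mem_Ici]; linarith)
      (by linarith))
  set c0 := m * hh with hc0def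
  have hc0 : 0 < c0 := mul_pos hm_pos hhpos
  have hDlim : Filter.Tendsto (fun b => M * D b) Filter.atTop (nhds 0) := by
    have := (hG₂_lim.sub hG₁_lim).const_mul M
    simpa using this
  have hev1 : ∀ᶠ b in Filter.atTop, M * D b < c0/4 :=
    hDlim.eventually_lt_const (by linarith)
  have hev2 : ∀ᶠ b in Filter.atTop, a + 1 ≤ b := Filter.eventually_ge_atTop (a+1)
  have hev : ∀ᶠ b in Filter.atTop, c0/2 ≤ F₂ b - F₁ b := by
    filter_upwards [hev1, hev2] with b hb1 hb2
    have hab : a < b := by linarith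
    obtain ⟨δ₁, hδ₁pos, hδ₁⟩ := hF₁ b hab (c0/8) (by linarith)
    obtain ⟨δ₂, hδ₂pos, hδ₂⟩ := hF₂ b hab (c0/8) (by linarith)
    set δ := min (min δ₁ δ₂) (1/2 : ℝ) with hδdef
    have hδpos : 0 < δ := lt_min (lt_min hδ₁pos hδ₂pos) (by norm_num)
    obtain ⟨n₀, hn₀⟩ := exists_nat_gt ((b - a)/δ)
    set n := n₀ + 1 with hndef
    have hnpos : 0 < (n:ℝ) := by positivity
    have hne : (n:ℝ) ≠ 0 := ne_of_gt hnpos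
    have hmesh0 : (b - a)/n < δ := by
      rw [div_lt_iff₀ hnpos]
      have h2 : b - a < (n₀:ℝ) * δ := (div_lt_iff₀ hδpos).mp hn₀
      have h3 : (n₀:ℝ) ≤ n := by exact_mod_cast Nat.le_succ n₀
      nlinarith
    set t : ℕ → ℝ := fun i => a + i * ((b-a)/n) with htdef
    have ht0 : t 0 = a := by simp [htdef]
    have htn : t n = b := by
      simp only [htdef]
      field_simp
      ring
    have hdiff : ∀ i, t (i+1) - t i = (b-a)/n := by
      intro i; simp only [htdef]; push_cast; ring
    have hstepnn : 0 ≤ (b-a)/n := div_nonneg (by linarith) hnpos.le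
    have hstep : ∀ i < n, t i ≤ t (i+1) := by
      intro i _
      simp only [htdef]
      have hcast : (i:ℝ) ≤ ((i+1 : ℕ) : ℝ) := by exact_mod_cast Nat.le_succ i
      have := mul_le_mul_of_nonneg_right hcast hstepnn
      linarith
    have hmesh : ∀ i < n, t (i+1) - t i < δ := fun i _ => (hdiff i) ▸ hmesh0
    have hξ : ∀ i < n, t i ∈ Set.Icc (t i) (t (i+1)) := fun i hi => ⟨le_rfl, hstep i hi⟩
    have hS₁ := hδ₁ n t t ht0 htn hstep hξ
      (fun i hi => (hmesh i hi).trans_le ((min_le_left _ _).trans (min_le_left _ _)))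
    have hS₂ := hδ₂ n t t ht0 htn hstep hξ
      (fun i hi => (hmesh i hi).trans_le ((min_le_left _ _).trans (min_le_right _ _)))
    simp only [rsSum] at hS₁ hS₂
    have hmesh2 : ∀ i < n, t (i+1) - t i < 1/2 := fun i hi =>
      (hmesh i hi).trans_le (min_le_right _ _)
    have hkey := key_lower a b H D m hh M hm_pos.le hb2 hH_mono.monotoneOn
      (hH_nonneg a Set.self_mem_Ici)
      (fun x hx => (abs_le.mp (hM x hx.1)).2)
      (fun x hx => (le_of_lt (sub_pos.mpr (hlt x hx.1))))
      hmD le_rfl n t ht0 htn hstep hmesh2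
    have hdiffsum :
        (∑ i ∈ Finset.range n, H (t i) * ((-G₂ (t (i + 1))) - (-G₂ (t i)))) -
        (∑ i ∈ Finset.range n, H (t i) * ((-G₁ (t (i + 1))) - (-G₁ (t i)))) =
        ∑ i ∈ Finset.range n, H (t i) * (D (t i) - D (t (i+1))) := by
      rw [← Finset.sum_sub_distrib]
      apply Finset.sum_congr rfl
      intro i _
      simp only [hDdef]
      ring
    rw [← hdiffsum] at hkey
    have e1 := abs_lt.mp hS₁
    have e2 := abs_lt.mp hS₂
    have hb1' : M * D b < c0/4 := hb1
    simp only [hDdef] at hkey hb1' ⊢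
    linarith [e1.1, e1.2, e2.1, e2.2]
  have hle : c0/2 ≤ I₂ - I₁ := ge_of_tendsto (hF₂lim.sub hF₁lim) hev
  linarith
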